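/- Assume Setting (S). Let A ∈ B be an atom of B and let q be an atom of T with q | A in F, and set g = [q] ∈ G. Then the element g·q^{−1}·A of F (obtained from A by removing the factor q from its T-component and appending the letter g to its F(G)-component) lies in B and is an atom of B. -/

import Mathlib

namespace ArXivSeminormal

attribute [local instance] Classical.propDecidable

noncomputable section

/-! ### Generic factorization theory in commutative monoids -/

variable {M : Type*} [CommMonoid M]

/-- The set of factorizations of `a` (in the sense of `Z(a)`): multisets of irreducible
elements of the reduced monoid (modelled by `Associates M`) whose product is the class
of `a`. -/
def Factorizations (a : M) : Set (Multiset (Associates M)) :=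
  {z | (∀ x ∈ z, Irreducible x) ∧ z.prod = Associates.mk a}

/-- The set of lengths `L(a)` of an element `a`. -/
def lengthSet (a : M) : Set ℕ :=
  {k | ∃ z ∈ Factorizations a, Multiset.card z = k}

/-- The set of (successive) distances `Δ(L)` of a set `L ⊆ ℕ`. -/
def DeltaSet (L : Set ℕ) : Set ℕ :=
  {d | ∃ k l, k ∈ L ∧ l ∈ L ∧ k < l ∧ (∀ m, k < m → m < l → m ∉ L) ∧ d = l - k}

/-- The set of distances `Δ(H)` of a monoid `H`. -/
def DeltaMonoid (M : Type*) [CommMonoid M] : Set ℕ :=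
  ⋃ a : M, DeltaSet (lengthSet a)

/-- The distance between two factorizations:
`d(z,z') = max (card (z - gcd z z')) (card (z' - gcd z z'))`. -/
def factorDist (z z' : Multiset (Associates M)) : ℕ :=
  max (Multiset.card (z - z')) (Multiset.card (z' - z))

/-- The catenary degree `c(H)` of a monoid `H`: the smallest `N ∈ ℕ∞` such that any two
factorizations of any element are connected by a chain of factorizations with consecutive
distances at most `N`. -/
def catenaryDegree (M : Type*) [CommMonoid M] : ℕ∞ :=
  sInf {N : ℕ∞ | ∀ (a : M), ∀ z ∈ Factorizations a, ∀ z' ∈ Factorizations a,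
    ∃ c : List (Multiset (Associates M)), c.head? = some z ∧ c.getLast? = some z' ∧
      (∀ w ∈ c, w ∈ Factorizations a) ∧
      List.Chain' (fun u v => (factorDist u v : ℕ∞) ≤ N) c}

/-- A monoid is factorial if every element has a unique factorization. -/
def IsFactorialMonoid (M : Type*) [CommMonoid M] : Prop :=
  ∀ a : M, ∃! z : Multiset (Associates M), z ∈ Factorizations a

/-! ### Free commutative monoids, block monoids, Davenport constant -/

/-- The free abelian (multiplicatively written) monoid on a set `P`. -/
abbrev FreeCM (P : Type*) := Multiplicative (Multiset P)

/-- The sum homomorphism `σ : F(G) → G`. -/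
def sigmaHom (G : Type*) [AddCommMonoid G] : FreeCM G →* Multiplicative G :=
  AddMonoidHom.toMultiplicative
    { toFun := Multiset.sum
      map_zero' := Multiset.sum_zero
      map_add' := Multiset.sum_add }

/-- The monoid of zero-sum sequences over `G`. -/
def BlockMonoid (G : Type*) [AddCommMonoid G] : Submonoid (FreeCM G) :=
  MonoidHom.mker (sigmaHom G)

/-- The Davenport constant of `G`: the supremum of lengths of minimal zero-sum sequences. -/
def Davenport (G : Type*) [AddCommMonoid G] : ℕ :=
  sSup {k | ∃ u : BlockMonoid G, Irreducible u ∧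
    Multiset.card (Multiplicative.toAdd (u : FreeCM G)) = k}

/-! ### Reduced seminormal finitely primary monoids -/

/-- The `Fin s →₀ ℕ` function with all values `1`, i.e. the exponent vector of
`q_1 ⋯ q_s`. -/
def allOnes (s : ℕ) : Fin s →₀ ℕ := Finsupp.equivFunOnFinite.symm fun _ => 1

/-- The reduced seminormal finitely primary monoid of rank `s` with unit group `U` of the
complete integral closure:
`D = {ε q_1^{k_1} ⋯ q_s^{k_s} : ε ∈ U, all k_j ≥ 1} ∪ {1} ⊆ U × [q_1,…,q_s]`. -/
def seminormalD (U : Type*) [CommGroup U] (s : ℕ) :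
    Submonoid (U × Multiplicative (Fin s →₀ ℕ)) where
  carrier := {x | x = 1 ∨ ∀ j, 1 ≤ Multiplicative.toAdd x.2 j}
  one_mem' := Or.inl rfl
  mul_mem' := by
    rintro a b (rfl | ha) (rfl | hb)
    · exact Or.inl (mul_one 1)
    · rw [Set.mem_setOf_eq, one_mul]; exact Or.inr hb
    · rw [Set.mem_setOf_eq, mul_one]; exact Or.inr ha
    · refine Or.inr fun j => ?_
      have h1 := ha j
      have h2 := hb j
      have h3 : Multiplicative.toAdd ((a * b).2) j
          = Multiplicative.toAdd a.2 j + Multiplicative.toAdd b.2 j := rfl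
      omega

/-! ### T-block monoids (Setting (S)) -/

/-- The monoid `T = D_1 × ⋯ × D_n`. -/
abbrev Tm {n : ℕ} (U : Fin n → Type*) [∀ i, CommGroup (U i)] (s : Fin n → ℕ) :=
  ∀ i, ↥(seminormalD (U i) (s i))

/-- The monoid `D̂_1 × ⋯ × D̂_n`. -/
abbrev HatTm {n : ℕ} (U : Fin n → Type*) [∀ i, CommGroup (U i)] (s : Fin n → ℕ) :=
  ∀ i, U i × Multiplicative (Fin (s i) →₀ ℕ)

/-- The monoid `F = F(G) × T`. -/
abbrev Fm (G : Type*) {n : ℕ} (U : Fin n → Type*) [∀ i, CommGroup (U i)] (s : Fin n → ℕ) :=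
  FreeCM G × Tm U s

/-- The homomorphism `F → G`, `S·t ↦ σ(S) + ι(t)`, whose kernel is the `T`-block monoid;
it computes the class `[a] ∈ G ≅ q(F)/q(B)` of `a ∈ F`. -/
def TBlockPhi (G : Type*) [AddCommGroup G] {n : ℕ} (U : Fin n → Type*) [∀ i, CommGroup (U i)]
    (s : Fin n → ℕ) (iota : Tm U s →* Multiplicative G) : Fm G U s →* Multiplicative G :=
  ((sigmaHom G).comp (MonoidHom.fst _ _)) * (iota.comp (MonoidHom.snd _ _))

/-- The `T`-block monoid `B = B(G, T, ι) = {S·t ∈ F(G) × T : σ(S) + ι(t) = 0}`. -/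
def TBlock (G : Type*) [AddCommGroup G] {n : ℕ} (U : Fin n → Type*) [∀ i, CommGroup (U i)]
    (s : Fin n → ℕ) (iota : Tm U s →* Multiplicative G) : Submonoid (Fm G U s) :=
  MonoidHom.mker (TBlockPhi G U s iota)

/-- The inclusion `T = D_1 × ⋯ × D_n → D̂_1 × ⋯ × D̂_n`. -/
def embedT {n : ℕ} (U : Fin n → Type*) [∀ i, CommGroup (U i)] (s : Fin n → ℕ) :
    Tm U s →* HatTm U s :=
  Pi.monoidHom fun i => (seminormalD (U i) (s i)).subtype.comp
    (Pi.evalMonoidHom (fun j => ↥(seminormalD (U j) (s j))) i)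

/-- The norm `‖A‖ = k + 2·Σ_i max L_{D_i}(a_i)` of `A = g_1⋯g_k a_1⋯a_n ∈ F`. -/
def normF (G : Type*) {n : ℕ} (U : Fin n → Type*) [∀ i, CommGroup (U i)] (s : Fin n → ℕ)
    (A : Fm G U s) : ℕ :=
  Multiset.card (Multiplicative.toAdd A.1) + 2 * ∑ i, sSup (lengthSet (A.2 i))

/-- The class `[ε] ∈ G` of a unit `ε ∈ D̂_ν^×`. -/
def classOfUnit {G : Type*} [AddCommGroup G] {n : ℕ} (U : Fin n → Type*)
    [∀ i, CommGroup (U i)] (s : Fin n → ℕ) (iotahat : HatTm U s →* Multiplicative G)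
    (ν : Fin n) (ε : U ν) : Multiplicative G :=
  iotahat (Pi.mulSingle ν (ε, 1))

/-- The class `[q_{ν,j}] ∈ G` of the prime `q_{ν,j}` of `D̂_ν`. -/
def classOfPrime {G : Type*} [AddCommGroup G] {n : ℕ} (U : Fin n → Type*)
    [∀ i, CommGroup (U i)] (s : Fin n → ℕ) (iotahat : HatTm U s →* Multiplicative G)
    (ν : Fin n) (j : Fin (s ν)) : Multiplicative G :=
  iotahat (Pi.mulSingle ν (1, Multiplicative.ofAdd (Finsupp.single j 1)))

/-- The quantity `d_ν ∈ {-1, 0, 1, 2}` from Theorem 3.3 (for `G = {0, e}` of order two). -/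
def dval {G : Type*} [AddCommGroup G] {n : ℕ} (U : Fin n → Type*) [∀ i, CommGroup (U i)]
    (s : Fin n → ℕ) (iotahat : HatTm U s →* Multiplicative G) (e : G) (ν : Fin n) : ℤ :=
  if (∀ ε : U ν, classOfUnit U s iotahat ν ε = 1) ∧ s ν = 2 ∧
      (Finset.univ.filter fun j : Fin (s ν) =>
        classOfPrime U s iotahat ν j = Multiplicative.ofAdd e).card = 2 then 2
  else if (∀ ε : U ν, classOfUnit U s iotahat ν ε = 1) ∧ s ν = 1 then 0
  else if (∀ ε : U ν, classOfUnit U s iotahat ν ε = 1) ∧ 2 ≤ s ν ∧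
      (Finset.univ.filter fun j : Fin (s ν) =>
        classOfPrime U s iotahat ν j = Multiplicative.ofAdd e).card = 0 then -1
  else 1

/-- Units of the free commutative monoid are trivial. -/
lemma freeCM_isUnit_eq_one {G : Type*} {x : FreeCM G} (h : IsUnit x) : x = 1 := by
  obtain ⟨y, hy⟩ := h.exists_right_inv
  have hadd : Multiplicative.toAdd x + Multiplicative.toAdd y = 0 := congrArg Multiplicative.toAdd hy
  have hcard : Multiset.card (Multiplicative.toAdd x) = 0 := by
    have h := congrArg Multiset.card hadd
    rw [Multiset.card_add] at h
    simp only [Multiset.card_zero] at h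
    omega
  have : Multiplicative.toAdd x = 0 := Multiset.card_eq_zero.mp hcard
  exact this

/-- Units of a reduced seminormal finitely primary monoid of positive rank are trivial. -/
lemma seminormalD_isUnit_eq_one {Ui : Type*} [CommGroup Ui] {si : ℕ} (hsi : 1 ≤ si)
    {x : ↥(seminormalD Ui si)} (h : IsUnit x) : x = 1 := by
  obtain ⟨y, hy⟩ := h.exists_right_inv
  have hval : (x : Ui × Multiplicative (Fin si →₀ ℕ)) * (y : Ui × Multiplicative (Fin si →₀ ℕ)) = 1 := by
    exact_mod_cast congrArg (Subtype.val) hy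
  have h2 : Multiplicative.toAdd (x : Ui × Multiplicative (Fin si →₀ ℕ)).2 +
      Multiplicative.toAdd (y : Ui × Multiplicative (Fin si →₀ ℕ)).2 = 0 := by
    have := congrArg (fun z => Multiplicative.toAdd z.2) hval
    simpa using this
  have hx2 : ∀ j, Multiplicative.toAdd (x : Ui × Multiplicative (Fin si →₀ ℕ)).2 j = 0 := by
    intro j
    have h3 := DFunLike.congr_fun h2 j
    simp only [Finsupp.add_apply, Finsupp.coe_zero, Pi.zero_apply] at h3
    omega
  rcases x.2 with h1 | h1
  · exact Subtype.ext h1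
  · exfalso
    have := h1 ⟨0, hsi⟩
    rw [hx2 ⟨0, hsi⟩] at this
    omega

/-- Units of `T` are trivial. -/
lemma Tm_isUnit_eq_one {n : ℕ} {U : Fin n → Type*} [∀ i, CommGroup (U i)] {s : Fin n → ℕ}
    (hs : ∀ i, 1 ≤ s i) {x : Tm U s} (h : IsUnit x) : x = 1 := by
  funext i
  exact seminormalD_isUnit_eq_one (hs i)
    (h.map (Pi.evalMonoidHom (fun j => ↥(seminormalD (U j) (s j))) i))

/-- Units of `F` are trivial. -/
lemma Fm_isUnit_eq_one {G : Type*} {n : ℕ} {U : Fin n → Type*} [∀ i, CommGroup (U i)]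
    {s : Fin n → ℕ} (hs : ∀ i, 1 ≤ s i) {x : Fm G U s} (h : IsUnit x) : x = 1 := by
  have h1 := freeCM_isUnit_eq_one (h.map (MonoidHom.fst _ _))
  have h2 := Tm_isUnit_eq_one hs (h.map (MonoidHom.snd _ _))
  exact Prod.ext h1 h2

/-- Units of the `T`-block monoid are trivial. -/
lemma TBlock_isUnit_eq_one {G : Type*} [AddCommGroup G] {n : ℕ} {U : Fin n → Type*}
    [∀ i, CommGroup (U i)] {s : Fin n → ℕ} (hs : ∀ i, 1 ≤ s i)
    {iota : Tm U s →* Multiplicative G} {a : ↥(TBlock G U s iota)} (h : IsUnit a) : a = 1 := by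
  have := Fm_isUnit_eq_one hs (h.map (TBlock G U s iota).subtype)
  exact Subtype.ext this

lemma sigmaHom_apply {G : Type*} [AddCommMonoid G] (m : Multiset G) :
    sigmaHom G (Multiplicative.ofAdd m) = Multiplicative.ofAdd m.sum := rfl

lemma TBlockPhi_apply {G : Type*} [AddCommGroup G] {n : ℕ} (U : Fin n → Type*)
    [∀ i, CommGroup (U i)] (s : Fin n → ℕ) (iota : Tm U s →* Multiplicative G)
    (x : Fm G U s) : TBlockPhi G U s iota x = sigmaHom G x.1 * iota x.2 := rfl

/-- Lemma 3.1(1): if `A` is an atom of the `T`-block monoid `B`, `q` is an atom of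
`T` dividing `A` in `F` (say `A = q·C`) and `g = [q] ∈ G`, then `g·q^{-1}·A` lies
in `B` and is an atom of `B`. -/
theorem tblock_exchange_prime_for_class
    {G : Type*} [AddCommGroup G] [Fintype G] (hG : 1 < Fintype.card G)
    {n : ℕ} (hn : 0 < n) (U : Fin n → Type*) [∀ i, CommGroup (U i)]
    (s : Fin n → ℕ) (hs : ∀ i, 1 ≤ s i)
    (iota : Tm U s →* Multiplicative G)
    (A : ↥(TBlock G U s iota)) (hA : Irreducible A)
    (q : Tm U s) (hq : Irreducible q)
    (C : Fm G U s)
    (hdvd : (A : Fm G U s) = ((1 : FreeCM G), q) * C) :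
    ∃ h : (Multiplicative.ofAdd ({Multiplicative.toAdd (iota q)} : Multiset G),
        (1 : Tm U s)) * C ∈ TBlock G U s iota,
      Irreducible (⟨(Multiplicative.ofAdd ({Multiplicative.toAdd (iota q)} : Multiset G),
        (1 : Tm U s)) * C, h⟩ : ↥(TBlock G U s iota)) := by
  set g : G := Multiplicative.toAdd (iota q) with hg
  set P : Fm G U s :=
    (Multiplicative.ofAdd ({g} : Multiset G), (1 : Tm U s)) * C with hP
  -- basic facts about A
  have hAmem : TBlockPhi G U s iota (A : Fm G U s) = 1 := A.2
  have hA1 : (A : Fm G U s).1 = C.1 := by rw [hdvd]; simp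
  have hA2 : (A : Fm G U s).2 = q * C.2 := by rw [hdvd]; rfl
  have hiq : Multiplicative.ofAdd g = iota q := by simp [hg]
  -- membership of P
  have hPmem : P ∈ TBlock G U s iota := by
    have : TBlockPhi G U s iota P = 1 := by
      rw [hP, map_mul, TBlockPhi_apply, TBlockPhi_apply]
      simp only [sigmaHom_apply, Multiset.sum_singleton, map_one, mul_one, hiq]
      have := hAmem
      rw [TBlockPhi_apply, hA1, hA2, map_mul] at this
      calc iota q * (sigmaHom G C.1 * iota C.2)
          = sigmaHom G C.1 * (iota q * iota C.2) := mul_left_comm _ _ _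
        _ = 1 := this
    exact this
  refine ⟨hPmem, ?_, ?_⟩
  · -- P is not a unit
    intro hu
    have hP1 : P = 1 := congrArg Subtype.val (TBlock_isUnit_eq_one hs hu)
    have h1 : P.1 = 1 := congrArg Prod.fst hP1
    have : ({g} : Multiset G) + Multiplicative.toAdd C.1 = 0 :=
      congrArg Multiplicative.toAdd h1
    have := congrArg Multiset.card this
    simp at this
  · -- key symmetric step
    have key : ∀ X Y : ↥(TBlock G U s iota), P = (X : Fm G U s) * (Y : Fm G U s) →
        g ∈ Multiplicative.toAdd (X : Fm G U s).1 → IsUnit Y := by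
      intro X Y hXY hgX
      set m : Multiset G := Multiplicative.toAdd (X : Fm G U s).1 with hm
      have hle : ({g} : Multiset G) ≤ m := Multiset.singleton_le.mpr hgX
      have hcancel : m - {g} + {g} = m := tsub_add_cancel_of_le hle
      -- first components of hXY
      have hXY1 : ({g} : Multiset G) + Multiplicative.toAdd C.1 =
          m + Multiplicative.toAdd (Y : Fm G U s).1 :=
        congrArg (fun z => Multiplicative.toAdd z.1) hXY
      -- second components of hXY
      have hXY2 : C.2 = (X : Fm G U s).2 * (Y : Fm G U s).2 := by
        have := congrArg Prod.snd hXY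
        simpa [hP] using this
      set Xc : Fm G U s := (Multiplicative.ofAdd (m - {g}), q * (X : Fm G U s).2) with hXc
      have hprod : (A : Fm G U s) = Xc * (Y : Fm G U s) := by
        refine Prod.ext ?_ ?_
        · rw [hA1]
          have h' : ({g} : Multiset G) + ((m - {g}) + Multiplicative.toAdd (Y : Fm G U s).1) =
              ({g} : Multiset G) + Multiplicative.toAdd C.1 := by
            rw [hXY1, ← add_assoc, add_comm ({g} : Multiset G) (m - {g}), hcancel]
          have hkey : (m - {g}) + Multiplicative.toAdd (Y : Fm G U s).1 =
              Multiplicative.toAdd C.1 := add_left_cancel h'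
          exact (congrArg Multiplicative.ofAdd hkey).symm
        · rw [hA2, hXY2]
          show q * ((X : Fm G U s).2 * (Y : Fm G U s).2) =
            q * (X : Fm G U s).2 * (Y : Fm G U s).2
          rw [mul_assoc]
      have hXcmem : Xc ∈ TBlock G U s iota := by
        have hXmem : TBlockPhi G U s iota (X : Fm G U s) = 1 := X.2
        rw [TBlockPhi_apply] at hXmem
        show TBlockPhi G U s iota Xc = 1
        rw [TBlockPhi_apply]
        have hsum : (m - {g}).sum + g = m.sum := by
          have := congrArg Multiset.sum hcancel
          simpa using this
        have hsig : sigmaHom G (Xc.1) * iota q = sigmaHom G (X : Fm G U s).1 := by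
          rw [hXc]
          show sigmaHom G (Multiplicative.ofAdd (m - {g})) * iota q = _
          rw [sigmaHom_apply, ← hiq, ← ofAdd_add, hsum]
          show Multiplicative.ofAdd m.sum = sigmaHom G (X : Fm G U s).1
          rw [← sigmaHom_apply]
          rfl
        calc sigmaHom G Xc.1 * iota Xc.2
            = sigmaHom G Xc.1 * (iota q * iota (X : Fm G U s).2) := by rw [hXc]; rw [map_mul]
          _ = (sigmaHom G Xc.1 * iota q) * iota (X : Fm G U s).2 := by rw [mul_assoc]
          _ = sigmaHom G (X : Fm G U s).1 * iota (X : Fm G U s).2 := by rw [hsig]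
          _ = 1 := hXmem
      have : A = (⟨Xc, hXcmem⟩ : ↥(TBlock G U s iota)) * Y := Subtype.ext hprod
      rcases hA.isUnit_or_isUnit this with hu | hu
      · exfalso
        have h1 : Xc = 1 := by
          have := TBlock_isUnit_eq_one hs hu
          exact congrArg Subtype.val this
        have h2 : q * (X : Fm G U s).2 = 1 := congrArg Prod.snd h1
        exact hq.not_isUnit (IsUnit.of_mul_eq_one _ h2)
      · exact hu
    intro X Y hXY
    have hXY' : P = (X : Fm G U s) * (Y : Fm G U s) :=
      congrArg Subtype.val hXY
    have hmem : g ∈ ({g} : Multiset G) + Multiplicative.toAdd C.1 :=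
      Multiset.mem_add.mpr (Or.inl (Multiset.mem_singleton_self g))
    have h1 : ({g} : Multiset G) + Multiplicative.toAdd C.1 =
        Multiplicative.toAdd (X : Fm G U s).1 + Multiplicative.toAdd (Y : Fm G U s).1 :=
      congrArg (fun z => Multiplicative.toAdd z.1) hXY'
    rw [h1, Multiset.mem_add] at hmem
    rcases hmem with hmX | hmY
    · exact Or.inr (key X Y hXY' hmX)
    · exact Or.inl (key Y X (by rw [hXY', mul_comm]) hmY)

end
end ArXivSeminormal
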